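/- Consider a finite nonempty partially ordered set P. Let the arrival times T : P → [0,1] and the weights W : P → [0,1] be random, with all 2|P| coordinates independent and uniformly distributed on [0,1]. Call an element x of P 'tagged' if x is the greedy maximum, with respect to W, of the induced partial order on {y ∈ P : T(y) ≤ T(x)}. Then for every t with 1/e < t ≤ 1, the probability that no element of P is tagged with arrival time in the interval (1/e, t] is at least 1/(e·t). -/

import Mathlib

open MeasureTheory Finset Function
open scoped Classical ENNReal

/-- The element of the finset `s` with minimum weight. -/
noncomputable def argminOn {α : Type*} (w : α → ℝ) (s : Finset α) (h : s.Nonempty) : α :=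
  (s.exists_min_image w h).choose

/-- One step of the greedy chain: if `x` is not maximal, move to the element of
minimum weight among those strictly above `x`; otherwise stay at `x`. -/
noncomputable def greedyStep {α : Type*} [PartialOrder α] [Fintype α] (w : α → ℝ) (x : α) : α :=
  if h : (Finset.univ.filter fun y => x < y).Nonempty then argminOn w _ h else x

/-- The greedy maximum of a finite nonempty partially ordered set with weights `w`:
start at the element of minimum weight and iterate `greedyStep` until stabilization
(`Fintype.card α` iterations suffice). -/
noncomputable def greedyMax {α : Type*} [PartialOrder α] [Fintype α] [Nonempty α]
    (w : α → ℝ) : α :=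
  (greedyStep w)^[Fintype.card α] (argminOn w Finset.univ Finset.univ_nonempty)

/-- `x` belongs to `s` and is the greedy maximum of the partial order induced on `s`,
with the weights `w` restricted to `s`. -/
def IsGreedyMaxOn {α : Type*} [PartialOrder α] [Fintype α]
    (w : α → ℝ) (s : Set α) (x : α) : Prop :=
  ∃ hx : x ∈ s,
    haveI : Nonempty s := ⟨⟨x, hx⟩⟩
    greedyMax (fun y : s => w y.1) = ⟨x, hx⟩

/-- `x` is *tagged*: it is the greedy maximum (w.r.t. the weights `w`) of the induced
partial order on the set of elements arriving no later than `x`. -/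
def Tagged {α : Type*} [PartialOrder α] [Fintype α] (T w : α → ℝ) (x : α) : Prop :=
  IsGreedyMaxOn w {y | T y ≤ T x} x

/-- The strategy accepts `x`: `x` is tagged, arrives after time `1/e`, and no other
element is tagged with arrival time in `(1/e, T x)`. -/
def Accepts {α : Type*} [PartialOrder α] [Fintype α] (T w : α → ℝ) (x : α) : Prop :=
  Tagged T w x ∧ 1 / Real.exp 1 < T x ∧
    ∀ y, Tagged T w y → 1 / Real.exp 1 < T y → T x ≤ T y

/-- The probability that `x` is the greedy maximum of `P` when the weights are
independent and uniform on `[0,1]`. -/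
noncomputable def muGreedy (P : Type) [Fintype P] [PartialOrder P] (x : P) : ℝ≥0∞ :=
  (Measure.pi fun _ : P => volume.restrict (Set.Icc (0:ℝ) 1)) {w | IsGreedyMaxOn w Set.univ x}

/-- The conditional probability that `x` is the greedy maximum of `P`, given `W x ≤ t`,
when the weights are independent and uniform on `[0,1]`. -/
noncomputable def muGreedyCond (P : Type) [Fintype P] [PartialOrder P] (t : ℝ) (x : P) : ℝ≥0∞ :=
  (Measure.pi fun _ : P => volume.restrict (Set.Icc (0:ℝ) 1))
      {w | IsGreedyMaxOn w Set.univ x ∧ w x ≤ t} /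
    (Measure.pi fun _ : P => volume.restrict (Set.Icc (0:ℝ) 1)) {w | w x ≤ t}


section Congr
variable {α : Type*}

theorem exists_choose_congr {p q : α → Prop} (h : p = q) (hp : ∃ a, p a) (hq : ∃ a, q a) :
    hp.choose = hq.choose := by subst h; rfl

theorem argminOn_congr {w w' : α → ℝ} (s : Finset α) (h h' : s.Nonempty)
    (hw : ∀ a b, (w a ≤ w b ↔ w' a ≤ w' b)) : argminOn w s h = argminOn w' s h' := by
  unfold _root_.argminOn
  exact exists_choose_congr (by
    funext b
    exact propext ⟨fun ⟨hb, hmin⟩ => ⟨hb, fun a ha => (hw b a).1 (hmin a ha)⟩,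
      fun ⟨hb, hmin⟩ => ⟨hb, fun a ha => (hw b a).2 (hmin a ha)⟩⟩) _ _

theorem greedyStep_congr [PartialOrder α] [Fintype α] {w w' : α → ℝ}
    (hw : ∀ a b, (w a ≤ w b ↔ w' a ≤ w' b)) (x : α) : greedyStep w x = greedyStep w' x := by
  unfold greedyStep
  split
  · exact argminOn_congr _ _ _ hw
  · rfl

theorem greedyMax_congr [PartialOrder α] [Fintype α] [Nonempty α] {w w' : α → ℝ}
    (hw : ∀ a b, (w a ≤ w b ↔ w' a ≤ w' b)) : greedyMax w = greedyMax w' := by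
  unfold greedyMax
  rw [argminOn_congr _ _ Finset.univ_nonempty hw]
  generalize argminOn w' Finset.univ Finset.univ_nonempty = z
  induction (Fintype.card α) generalizing z with
  | zero => rfl
  | succ n ih =>
    rw [Function.iterate_succ_apply, Function.iterate_succ_apply, greedyStep_congr hw, ih]

theorem isGreedyMaxOn_congr [PartialOrder α] [Fintype α] {w w' : α → ℝ} (s : Set α) (x : α)
    (hw : ∀ a b, (w a ≤ w b ↔ w' a ≤ w' b)) :
    IsGreedyMaxOn w s x ↔ IsGreedyMaxOn w' s x := by
  unfold IsGreedyMaxOn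
  constructor
  · rintro ⟨hx, hgm⟩
    refine ⟨hx, ?_⟩
    haveI : Nonempty s := ⟨⟨x, hx⟩⟩
    rw [← hgm]
    exact greedyMax_congr fun a b => (hw a.1 b.1).symm
  · rintro ⟨hx, hgm⟩
    refine ⟨hx, ?_⟩
    haveI : Nonempty s := ⟨⟨x, hx⟩⟩
    rw [← hgm]
    exact greedyMax_congr fun a b => hw a.1 b.1

end Congr

section GreedyBasic
variable {α : Type*} [PartialOrder α] [Fintype α]

theorem isGreedyMaxOn_unique {w : α → ℝ} {s : Set α} {x x' : α}
    (h : IsGreedyMaxOn w s x) (h' : IsGreedyMaxOn w s x') : x = x' := by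
  obtain ⟨hx, e1⟩ := h
  obtain ⟨hx', e2⟩ := h'
  have := e1.symm.trans e2
  exact congrArg Subtype.val this

theorem isGreedyMaxOn_exists (w : α → ℝ) (s : Set α) (hs : s.Nonempty) :
    ∃ x, IsGreedyMaxOn w s x := by
  haveI : Nonempty s := hs.to_subtype
  exact ⟨(greedyMax (fun y : s => w y.1)).1, (greedyMax (fun y : s => w y.1)).2, rfl⟩

theorem measurableSet_isGreedyMaxOn (s : Set α) (x : α) :
    MeasurableSet {w : α → ℝ | IsGreedyMaxOn w s x} := by
  classical
  have hiff : ∀ w w' : α → ℝ, (∀ a b, (w a ≤ w b ↔ w' a ≤ w' b)) →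
      (IsGreedyMaxOn w s x ↔ IsGreedyMaxOn w' s x) := fun w w' h =>
    isGreedyMaxOn_congr s x h
  have hset : {w : α → ℝ | IsGreedyMaxOn w s x} =
      ⋃ ρ : α → α → Bool, ⋃ _ : (∃ w₀ : α → ℝ, IsGreedyMaxOn w₀ s x ∧
          ∀ a b, ((w₀ a ≤ w₀ b) ↔ ρ a b = true)),
        {w : α → ℝ | ∀ a b, ((w a ≤ w b) ↔ ρ a b = true)} := by
    ext w
    simp only [Set.mem_setOf_eq, Set.mem_iUnion]
    constructor
    · intro hw
      refine ⟨fun a b => decide (w a ≤ w b), ⟨w, hw, fun a b => by simp⟩, fun a b => by simp⟩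
    · rintro ⟨ρ, ⟨w₀, hw₀, hpat₀⟩, hpat⟩
      exact (hiff w w₀ (fun a b => (hpat a b).trans (hpat₀ a b).symm)).mpr hw₀
  rw [hset]
  refine MeasurableSet.iUnion fun ρ => MeasurableSet.iUnion fun _ => ?_
  have : {w : α → ℝ | ∀ a b, ((w a ≤ w b) ↔ ρ a b = true)} =
      ⋂ a, ⋂ b, {w : α → ℝ | (w a ≤ w b) ↔ ρ a b = true} := by
    ext w; simp
  rw [this]
  refine MeasurableSet.iInter fun a => MeasurableSet.iInter fun b => ?_
  have hle : MeasurableSet {w : α → ℝ | w a ≤ w b} :=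
    measurableSet_le (measurable_pi_apply a) (measurable_pi_apply b)
  by_cases hρ : ρ a b = true
  · simpa [hρ] using hle
  · have : {w : α → ℝ | (w a ≤ w b) ↔ ρ a b = true} = {w : α → ℝ | w a ≤ w b}ᶜ := by
      ext w; simp [hρ]
    rw [this]; exact hle.compl

end GreedyBasic

section Events
variable {P : Type} [Fintype P] [PartialOrder P]

/-- `x` is tagged within `R` at the configuration `η` (times are the `Sum.inl` coordinates),
with respect to the fixed weight function `w`. -/
def TagIn (w : P → ℝ) (R : Finset P) (η : (P ⊕ P) → ℝ) (x : P) : Prop :=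
  IsGreedyMaxOn w ↑(R.filter fun y => η (Sum.inl y) ≤ η (Sum.inl x)) x

/-- All times of elements of `R` are `< M`, and no element of `R` is tagged (within `R`,
w.r.t. weights `w`) with time in `(s, t]`. -/
def DSet (w : P → ℝ) (R : Finset P) (s t M : ℝ) : Set ((P ⊕ P) → ℝ) :=
  {η | (∀ y ∈ R, η (Sum.inl y) < M) ∧
    ∀ x ∈ R, TagIn w R η x → ¬(s < η (Sum.inl x) ∧ η (Sum.inl x) ≤ t)}

lemma measurableSet_filter_eq (R Q : Finset P) (x : P) :
    MeasurableSet {η : (P ⊕ P) → ℝ |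
      (R.filter fun y => η (Sum.inl y) ≤ η (Sum.inl x)) = Q} := by
  have h : {η : (P ⊕ P) → ℝ | (R.filter fun y => η (Sum.inl y) ≤ η (Sum.inl x)) = Q} =
      ⋂ y : P, {η : (P ⊕ P) → ℝ |
        (y ∈ R ∧ η (Sum.inl y) ≤ η (Sum.inl x)) ↔ y ∈ Q} := by
    ext η
    simp only [Set.mem_setOf_eq, Set.mem_iInter, Finset.ext_iff, Finset.mem_filter]
  rw [h]
  refine MeasurableSet.iInter fun y => ?_
  have hle : MeasurableSet {η : (P ⊕ P) → ℝ | η (Sum.inl y) ≤ η (Sum.inl x)} :=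
    measurableSet_le (measurable_pi_apply _) (measurable_pi_apply _)
  by_cases hyQ : y ∈ Q <;> by_cases hyR : y ∈ R
  · simpa [hyQ, hyR] using hle
  · have : {η : (P ⊕ P) → ℝ | (y ∈ R ∧ η (Sum.inl y) ≤ η (Sum.inl x)) ↔ y ∈ Q} = ∅ := by
      ext η; simp [hyQ, hyR]
    rw [this]; exact MeasurableSet.empty
  · have : {η : (P ⊕ P) → ℝ | (y ∈ R ∧ η (Sum.inl y) ≤ η (Sum.inl x)) ↔ y ∈ Q} =
        {η : (P ⊕ P) → ℝ | η (Sum.inl y) ≤ η (Sum.inl x)}ᶜ := by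
      ext η; simp [hyQ, hyR]
    rw [this]; exact hle.compl
  · have : {η : (P ⊕ P) → ℝ | (y ∈ R ∧ η (Sum.inl y) ≤ η (Sum.inl x)) ↔ y ∈ Q} =
        Set.univ := by
      ext η; simp [hyQ, hyR]
    rw [this]; exact MeasurableSet.univ

lemma measurableSet_tagIn (w : P → ℝ) (R : Finset P) (x : P) :
    MeasurableSet {η : (P ⊕ P) → ℝ | TagIn w R η x} := by
  have h : {η : (P ⊕ P) → ℝ | TagIn w R η x} =
      ⋃ Q : Finset P, ⋃ _ : IsGreedyMaxOn w ↑Q x,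
        {η : (P ⊕ P) → ℝ | (R.filter fun y => η (Sum.inl y) ≤ η (Sum.inl x)) = Q} := by
    ext η
    simp only [Set.mem_setOf_eq, Set.mem_iUnion]
    constructor
    · intro hη
      exact ⟨_, hη, rfl⟩
    · rintro ⟨Q, hQ, hfil⟩
      unfold TagIn
      rw [hfil]; exact hQ
  rw [h]
  exact MeasurableSet.iUnion fun Q => MeasurableSet.iUnion fun _ =>
    measurableSet_filter_eq R Q x

lemma measurableSet_tagIn_joint (R : Finset P) (x : P) :
    MeasurableSet {η : (P ⊕ P) → ℝ | TagIn (fun p => η (Sum.inr p)) R η x} := by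
  have hmap : Measurable fun (η : (P ⊕ P) → ℝ) => (fun p => η (Sum.inr p) : P → ℝ) :=
    measurable_pi_lambda _ fun p => measurable_pi_apply _
  have h : {η : (P ⊕ P) → ℝ | TagIn (fun p => η (Sum.inr p)) R η x} =
      ⋃ Q : Finset P,
        ({η : (P ⊕ P) → ℝ | (R.filter fun y => η (Sum.inl y) ≤ η (Sum.inl x)) = Q} ∩
          ((fun (η : (P ⊕ P) → ℝ) => (fun p => η (Sum.inr p) : P → ℝ)) ⁻¹'
            {w : P → ℝ | IsGreedyMaxOn w ↑Q x})) := by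
    ext η
    simp only [Set.mem_setOf_eq, Set.mem_iUnion, Set.mem_inter_iff, Set.mem_preimage]
    constructor
    · intro hη
      exact ⟨_, rfl, hη⟩
    · rintro ⟨Q, hfil, hQ⟩
      unfold TagIn
      rw [hfil]; exact hQ
  rw [h]
  exact MeasurableSet.iUnion fun Q =>
    (measurableSet_filter_eq R Q x).inter (hmap (measurableSet_isGreedyMaxOn _ _))

lemma measurableSet_noTag (w : P → ℝ) (R : Finset P) (s t : ℝ) :
    MeasurableSet {η : (P ⊕ P) → ℝ | ∀ x ∈ R, TagIn w R η x →
      ¬(s < η (Sum.inl x) ∧ η (Sum.inl x) ≤ t)} := by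
  have : {η : (P ⊕ P) → ℝ | ∀ x ∈ R, TagIn w R η x →
      ¬(s < η (Sum.inl x) ∧ η (Sum.inl x) ≤ t)} =
      ⋂ x : P, ⋂ _ : x ∈ R, ({η : (P ⊕ P) → ℝ | TagIn w R η x}ᶜ ∪
        {η : (P ⊕ P) → ℝ | s < η (Sum.inl x) ∧ η (Sum.inl x) ≤ t}ᶜ) := by
    ext η
    simp only [Set.mem_setOf_eq, Set.mem_iInter, Set.mem_union, Set.mem_compl_iff]
    constructor
    · intro h x hx
      by_cases ht : TagIn w R η x
      · exact Or.inr fun hc => h x hx ht hc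
      · exact Or.inl ht
    · intro h x hx ht hc
      rcases h x hx with h' | h'
      · exact h' ht
      · exact h' hc
  rw [this]
  refine MeasurableSet.iInter fun x => MeasurableSet.iInter fun _ => ?_
  exact ((measurableSet_tagIn w R x).compl).union
    (((measurableSet_lt measurable_const (measurable_pi_apply _)).inter
      (measurableSet_le (measurable_pi_apply _) measurable_const)).compl)

lemma measurableSet_timeBound (R : Finset P) (M : ℝ) :
    MeasurableSet {η : (P ⊕ P) → ℝ | ∀ y ∈ R, η (Sum.inl y) < M} := by
  have : {η : (P ⊕ P) → ℝ | ∀ y ∈ R, η (Sum.inl y) < M} =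
      ⋂ y : P, ⋂ _ : y ∈ R, {η : (P ⊕ P) → ℝ | η (Sum.inl y) < M} := by
    ext η; simp
  rw [this]
  exact MeasurableSet.iInter fun y => MeasurableSet.iInter fun _ =>
    measurableSet_lt (measurable_pi_apply _) measurable_const

lemma measurableSet_DSet (w : P → ℝ) (R : Finset P) (s t M : ℝ) :
    MeasurableSet (DSet w R s t M) :=
  (measurableSet_timeBound R M).inter (measurableSet_noTag w R s t)

end Events

section Integrals

lemma prob_restrict_Icc : IsProbabilityMeasure (volume.restrict (Set.Icc (0:ℝ) 1)) := by
  constructor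
  rw [Measure.restrict_apply MeasurableSet.univ, Set.univ_inter, Real.volume_Icc]
  norm_num

lemma lintegral_indicator_pow {a b c : ℝ} (n : ℕ) (ha : 0 ≤ a) (hab : a ≤ b) (hb1 : b ≤ 1)
    (hc : 0 ≤ c) :
    ∫⁻ r, (Set.Ioo a b).indicator (fun r => ENNReal.ofReal (c * r ^ n)) r
        ∂(volume.restrict (Set.Icc (0:ℝ) 1)) =
      ENNReal.ofReal (c * ((b ^ (n + 1) - a ^ (n + 1)) / (n + 1))) := by
  rw [lintegral_indicator measurableSet_Ioo,
    Measure.restrict_restrict measurableSet_Ioo]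
  have hsub : Set.Ioo a b ∩ Set.Icc (0:ℝ) 1 = Set.Ioo a b := by
    apply Set.inter_eq_left.mpr
    intro r hr
    exact ⟨le_of_lt (lt_of_le_of_lt ha hr.1), le_of_lt (lt_of_lt_of_le hr.2 hb1)⟩
  rw [hsub]
  have hcont : Continuous fun r : ℝ => c * r ^ n := continuous_const.mul (continuous_pow n)
  have hint : MeasureTheory.IntegrableOn (fun r : ℝ => c * r ^ n) (Set.Ioo a b) volume :=
    (hcont.integrableOn_Icc).mono_set Set.Ioo_subset_Icc_self
  rw [← MeasureTheory.ofReal_integral_eq_lintegral_ofReal hint]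
  · congr 1
    have h1 : ∫ r in Set.Ioo a b, c * r ^ n ∂volume = ∫ r in a..b, c * r ^ n := by
      rw [intervalIntegral.integral_of_le hab, MeasureTheory.integral_Ioc_eq_integral_Ioo]
    rw [h1, intervalIntegral.integral_const_mul, integral_pow]
  · refine (MeasureTheory.ae_restrict_iff' measurableSet_Ioo).mpr ?_
    filter_upwards with r hr
    exact mul_nonneg hc (pow_nonneg (le_of_lt (lt_of_le_of_lt ha hr.1)) n)

end Integrals

section Key
variable {P : Type} [Fintype P] [PartialOrder P]

lemma lmarginal_finset_sum {ι : Type*} (Δ : Finset (P ⊕ P)) (R : Finset ι)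
    (f : ι → ((P ⊕ P) → ℝ) → ℝ≥0∞) (hf : ∀ x, Measurable (f x)) (ω : (P ⊕ P) → ℝ) :
    (∫⋯∫⁻_Δ, (fun η => ∑ x ∈ R, f x η) ∂fun _ => volume.restrict (Set.Icc (0:ℝ) 1)) ω =
      ∑ x ∈ R, (∫⋯∫⁻_Δ, f x ∂fun _ => volume.restrict (Set.Icc (0:ℝ) 1)) ω := by
  unfold lmarginal
  rw [lintegral_finset_sum]
  exact fun x _ => (hf x).comp measurable_updateFinset

theorem key_lemma (w : P → ℝ) :
    ∀ (k : ℕ) (R : Finset P), R.card = k → ∀ s t M : ℝ, 0 ≤ s → s ≤ t → t ≤ M → M ≤ 1 →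
    ∀ ω : (P ⊕ P) → ℝ,
    ENNReal.ofReal (s / t * M ^ k) ≤
      (∫⋯∫⁻_(R.image Sum.inl), (DSet w R s t M).indicator (fun _ => (1:ℝ≥0∞))
        ∂fun _ => volume.restrict (Set.Icc (0:ℝ) 1)) ω := by
  haveI := prob_restrict_Icc
  intro k
  induction k with
  | zero =>
    intro R hcard s t M hs hst htM hM1 ω
    rw [Finset.card_eq_zero.mp hcard, Finset.image_empty, lmarginal_empty]
    have hmem : ω ∈ DSet w ∅ s t M :=
      ⟨fun y hy => absurd hy (Finset.notMem_empty _),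
       fun x hx => absurd hx (Finset.notMem_empty _)⟩
    rw [Set.indicator_of_mem hmem, pow_zero, mul_one]
    exact ENNReal.ofReal_le_one.mpr (div_le_one_of_le₀ hst (le_trans hs hst))
  | succ k IH =>
    intro R hcard s t M hs hst htM hM1 ω
    by_cases htpos : 0 < t
    case neg =>
      have hs0 : s = 0 := le_antisymm (le_trans hst (not_lt.mp htpos)) hs
      simp [hs0]
    -- main case
    have hR : R.Nonempty := Finset.card_pos.mp (by omega)
    have htne : t ≠ 0 := ne_of_gt htpos
    obtain ⟨x₀, hgm₀⟩ := isGreedyMaxOn_exists w (↑R) (by exact_mod_cast hR.to_set)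
    have hx₀R : x₀ ∈ R := by
      obtain ⟨hx, -⟩ := hgm₀; exact_mod_cast hx
    -- the events G x
    set G : P → Set ((P ⊕ P) → ℝ) := fun x =>
      {η | (∀ y ∈ R.erase x, η (Sum.inl y) < η (Sum.inl x)) ∧
        0 < η (Sum.inl x) ∧ η (Sum.inl x) < M ∧
        (x = x₀ → ¬(s < η (Sum.inl x) ∧ η (Sum.inl x) ≤ t)) ∧
        ∀ z ∈ R.erase x, TagIn w (R.erase x) η z →
          ¬(s < η (Sum.inl z) ∧ η (Sum.inl z) ≤ t)} with hGdef
    have hGmeas : ∀ x, MeasurableSet (G x) := by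
      intro x
      have h1 : MeasurableSet {η : (P ⊕ P) → ℝ |
          ∀ y ∈ R.erase x, η (Sum.inl y) < η (Sum.inl x)} := by
        have : {η : (P ⊕ P) → ℝ | ∀ y ∈ R.erase x, η (Sum.inl y) < η (Sum.inl x)} =
            ⋂ y : P, ⋂ _ : y ∈ R.erase x,
              {η : (P ⊕ P) → ℝ | η (Sum.inl y) < η (Sum.inl x)} := by
          ext η; simp
        rw [this]
        exact MeasurableSet.iInter fun y => MeasurableSet.iInter fun _ =>
          measurableSet_lt (measurable_pi_apply _) (measurable_pi_apply _)
      have h2 : MeasurableSet {η : (P ⊕ P) → ℝ | 0 < η (Sum.inl x)} :=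
        measurableSet_lt measurable_const (measurable_pi_apply _)
      have h3 : MeasurableSet {η : (P ⊕ P) → ℝ | η (Sum.inl x) < M} :=
        measurableSet_lt (measurable_pi_apply _) measurable_const
      have h4 : MeasurableSet {η : (P ⊕ P) → ℝ |
          x = x₀ → ¬(s < η (Sum.inl x) ∧ η (Sum.inl x) ≤ t)} := by
        by_cases hxx : x = x₀
        · have : {η : (P ⊕ P) → ℝ |
              x = x₀ → ¬(s < η (Sum.inl x) ∧ η (Sum.inl x) ≤ t)} =
              ({η : (P ⊕ P) → ℝ | s < η (Sum.inl x) ∧ η (Sum.inl x) ≤ t})ᶜ := by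
            ext η; simp [hxx]
          rw [this]
          exact (((measurableSet_lt measurable_const (measurable_pi_apply _))).inter
            (measurableSet_le (measurable_pi_apply _) measurable_const)).compl
        · have : {η : (P ⊕ P) → ℝ |
              x = x₀ → ¬(s < η (Sum.inl x) ∧ η (Sum.inl x) ≤ t)} = Set.univ := by
            ext η; simp [hxx]
          rw [this]; exact MeasurableSet.univ
      exact h1.inter (h2.inter (h3.inter (h4.inter (measurableSet_noTag w (R.erase x) s t))))
    have hGsub : ∀ x ∈ R, G x ⊆ DSet w R s t M := by
      intro x hx η hη
      obtain ⟨hlast, hpos, hltM, himp, htags⟩ := hη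
      refine ⟨?_, ?_⟩
      · intro y hy
        rcases eq_or_ne y x with rfl | hne
        · exact hltM
        · exact lt_trans (hlast y (Finset.mem_erase.mpr ⟨hne, hy⟩)) hltM
      · intro z hz htag hcon
        rcases eq_or_ne z x with rfl | hne
        · have hfil : (R.filter fun y => η (Sum.inl y) ≤ η (Sum.inl z)) = R :=
            Finset.filter_true_of_mem (fun y hy => by
              rcases eq_or_ne y z with rfl | hne'
              · exact le_refl _
              · exact le_of_lt (hlast y (Finset.mem_erase.mpr ⟨hne', hy⟩)))
          unfold TagIn at htag
          rw [hfil] at htag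
          exact himp (isGreedyMaxOn_unique htag hgm₀) hcon
        · have hzlt : η (Sum.inl z) < η (Sum.inl x) :=
            hlast z (Finset.mem_erase.mpr ⟨hne, hz⟩)
          have hfil : (R.filter fun y => η (Sum.inl y) ≤ η (Sum.inl z)) =
              ((R.erase x).filter fun y => η (Sum.inl y) ≤ η (Sum.inl z)) := by
            ext y
            simp only [Finset.mem_filter, Finset.mem_erase]
            constructor
            · rintro ⟨hyR, hyle⟩
              refine ⟨⟨?_, hyR⟩, hyle⟩
              rintro rfl
              exact absurd (lt_of_le_of_lt hyle hzlt) (lt_irrefl _)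
            · rintro ⟨⟨-, hyR⟩, hyle⟩; exact ⟨hyR, hyle⟩
          have htag' : TagIn w (R.erase x) η z := by
            unfold TagIn at htag ⊢
            rw [← hfil]; exact htag
          exact htags z (Finset.mem_erase.mpr ⟨hne, hz⟩) htag' hcon
    have hGdisj : ∀ x ∈ R, ∀ x' ∈ R, x ≠ x' → ∀ η, η ∈ G x → η ∉ G x' := by
      intro x hx x' hx' hne η hη hη'
      have h1 := hη.1 x' (Finset.mem_erase.mpr ⟨hne.symm, hx'⟩)
      have h2 := hη'.1 x (Finset.mem_erase.mpr ⟨hne, hx⟩)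
      exact absurd (h1.trans h2) (lt_irrefl _)
    -- pointwise domination of the sum of indicators
    have hpt : ∀ η, ∑ x ∈ R, (G x).indicator (fun _ => (1:ℝ≥0∞)) η ≤
        (DSet w R s t M).indicator (fun _ => (1:ℝ≥0∞)) η := by
      intro η
      by_cases hmem : ∃ x ∈ R, η ∈ G x
      · obtain ⟨x, hx, hηx⟩ := hmem
        rw [Finset.sum_eq_single x]
        · rw [Set.indicator_of_mem hηx, Set.indicator_of_mem (hGsub x hx hηx)]
        · intro b hb hbx
          exact Set.indicator_of_notMem (hGdisj x hx b hb (Ne.symm hbx) η hηx) _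
        · intro hx'; exact absurd hx hx'
      · push_neg at hmem
        have hz : ∀ x ∈ R, (G x).indicator (fun _ => (1:ℝ≥0∞)) η = 0 := fun x hx =>
          Set.indicator_of_notMem (hmem x hx) _
        rw [Finset.sum_congr rfl hz]
        simp
    -- section inclusion
    have hsection : ∀ x ∈ R, ∀ r s' t' : ℝ, 0 < r → r < M →
        (x = x₀ → ¬(s < r ∧ r ≤ t)) →
        (∀ u : ℝ, u < r → (s < u ∧ u ≤ t) → (s' < u ∧ u ≤ t')) →
        ∀ η : (P ⊕ P) → ℝ, η (Sum.inl x) = r →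
        η ∈ DSet w (R.erase x) s' t' r → η ∈ G x := by
      intro x hx r s' t' hr hrM himp hcond η hηx hηD
      obtain ⟨hTime, hTag⟩ := hηD
      refine ⟨?_, ?_, ?_, ?_, ?_⟩
      · intro y hy; rw [hηx]; exact hTime y hy
      · rw [hηx]; exact hr
      · rw [hηx]; exact hrM
      · rw [hηx]; exact himp
      · intro z hz htag hcon
        exact hTag z hz htag (hcond (η (Sum.inl z)) (hTime z hz) hcon)
    -- peeling the coordinate of the last arrival
    have hcardE : ∀ x ∈ R, (R.erase x).card = k := by
      intro x hx; rw [Finset.card_erase_of_mem hx, hcard]; omega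
    have hnotmem : ∀ x : P, (Sum.inl x : P ⊕ P) ∉ (R.erase x).image Sum.inl := by
      intro x h
      obtain ⟨y, hy, hxy⟩ := Finset.mem_image.mp h
      cases Sum.inl.inj hxy
      exact (Finset.mem_erase.mp hy).1 rfl
    have hins : ∀ x ∈ R, R.image Sum.inl =
        insert (Sum.inl x : P ⊕ P) ((R.erase x).image (Sum.inl : P → P ⊕ P)) := by
      intro x hx
      conv_lhs => rw [← Finset.insert_erase hx]
      rw [Finset.image_insert]
    -- inner bound per regime
    have hinner : ∀ x ∈ R, ∀ r s' t' : ℝ, 0 ≤ s' → s' ≤ t' → t' ≤ r → r ≤ 1 →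
        0 < r → r < M → (x = x₀ → ¬(s < r ∧ r ≤ t)) →
        (∀ u : ℝ, u < r → (s < u ∧ u ≤ t) → (s' < u ∧ u ≤ t')) →
        ENNReal.ofReal (s' / t' * r ^ k) ≤
          (∫⋯∫⁻_((R.erase x).image Sum.inl), (G x).indicator (fun _ => (1:ℝ≥0∞))
            ∂fun _ => volume.restrict (Set.Icc (0:ℝ) 1))
            (Function.update ω (Sum.inl x) r) := by
      intro x hx r s' t' hs' hst' htr' hr1 hr hrM himp hcond
      refine le_trans (IH (R.erase x) (hcardE x hx) s' t' r hs' hst' htr' hr1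
        (Function.update ω (Sum.inl x) r)) ?_
      unfold lmarginal
      apply lintegral_mono
      intro y
      set η := Function.updateFinset (Function.update ω (Sum.inl x) r)
        ((R.erase x).image Sum.inl) y with hηdef
      have hηx : η (Sum.inl x) = r := by
        rw [hηdef]
        unfold Function.updateFinset
        rw [dif_neg (hnotmem x)]
        exact Function.update_self _ _ _
      show (DSet w (R.erase x) s' t' r).indicator (fun _ => (1:ℝ≥0∞)) η ≤
        (G x).indicator (fun _ => (1:ℝ≥0∞)) η
      by_cases hmem : η ∈ DSet w (R.erase x) s' t' r
      · rw [Set.indicator_of_mem hmem,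
          Set.indicator_of_mem (hsection x hx r s' t' hr hrM himp hcond η hηx hmem)]
      · rw [Set.indicator_of_notMem hmem]
        exact zero_le
    -- outer integral bounds
    have hmeasind : ∀ x, Measurable ((G x).indicator (fun _ => (1:ℝ≥0∞))) := fun x =>
      measurable_const.indicator (hGmeas x)
    set lmarg : P → ℝ≥0∞ := fun x =>
      (∫⋯∫⁻_(R.image Sum.inl), (G x).indicator (fun _ => (1:ℝ≥0∞))
        ∂fun _ => volume.restrict (Set.Icc (0:ℝ) 1)) ω with hlmargdef
    have hpeel : ∀ x ∈ R, lmarg x =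
        ∫⁻ r, (∫⋯∫⁻_((R.erase x).image Sum.inl), (G x).indicator (fun _ => (1:ℝ≥0∞))
          ∂fun _ => volume.restrict (Set.Icc (0:ℝ) 1)) (Function.update ω (Sum.inl x) r)
          ∂(volume.restrict (Set.Icc (0:ℝ) 1)) := by
      intro x hx
      rw [hlmargdef]
      simp only
      rw [hins x hx]
      exact lmarginal_insert _ (hmeasind x) (hnotmem x) ω
    have hs1 : s ≤ 1 := le_trans hst (le_trans htM hM1)
    have ht1 : t ≤ 1 := le_trans htM hM1
    have ht0 : (0:ℝ) ≤ t := le_trans hs hst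
    set ψ1 : ℝ → ℝ≥0∞ :=
      (Set.Ioo (0:ℝ) s).indicator (fun r => ENNReal.ofReal (1 * r ^ k)) with hψ1def
    set ψ2 : ℝ → ℝ≥0∞ :=
      (Set.Ioo s t).indicator (fun r => ENNReal.ofReal (s * r ^ (k-1))) with hψ2def
    set ψ3 : ℝ → ℝ≥0∞ :=
      (Set.Ioo t M).indicator (fun r => ENNReal.ofReal ((s/t) * r ^ k)) with hψ3def
    have hψ1m : Measurable ψ1 :=
      ((measurable_const.mul (measurable_id.pow_const k)).ennreal_ofReal).indicator
        measurableSet_Ioo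
    have hψ2m : Measurable ψ2 :=
      ((measurable_const.mul (measurable_id.pow_const (k-1))).ennreal_ofReal).indicator
        measurableSet_Ioo
    have hψ3m : Measurable ψ3 :=
      ((measurable_const.mul (measurable_id.pow_const k)).ennreal_ofReal).indicator
        measurableSet_Ioo
    -- pointwise bounds on the inner marginal
    have hb0 : ∀ r : ℝ, ψ1 r + ψ3 r ≤
        (∫⋯∫⁻_((R.erase x₀).image Sum.inl), (G x₀).indicator (fun _ => (1:ℝ≥0∞))
          ∂fun _ => volume.restrict (Set.Icc (0:ℝ) 1))
          (Function.update ω (Sum.inl x₀) r) := by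
      intro r
      by_cases h1 : r ∈ Set.Ioo (0:ℝ) s
      · have h3 : r ∉ Set.Ioo t M := fun hr =>
          absurd (lt_trans hr.1 h1.2) (not_lt.mpr hst)
        rw [hψ1def, hψ3def, Set.indicator_of_mem h1, Set.indicator_of_notMem h3, add_zero]
        have hb := hinner x₀ hx₀R r r r (le_of_lt h1.1) le_rfl le_rfl
          (le_trans (le_of_lt h1.2) hs1) h1.1 (lt_of_lt_of_le h1.2 (le_trans hst htM))
          (fun _ hcon => lt_asymm h1.2 hcon.1)
          (fun u hur hcon => absurd hcon.1 (not_lt.mpr (le_of_lt (lt_trans hur h1.2))))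
        rw [div_self (ne_of_gt h1.1)] at hb
        exact hb
      · by_cases h3 : r ∈ Set.Ioo t M
        · rw [hψ1def, hψ3def, Set.indicator_of_notMem h1, Set.indicator_of_mem h3, zero_add]
          exact hinner x₀ hx₀R r s t hs hst (le_of_lt h3.1)
            (le_trans (le_of_lt h3.2) hM1) (lt_of_le_of_lt ht0 h3.1) h3.2
            (fun _ hcon => absurd hcon.2 (not_le.mpr h3.1))
            (fun u _ hcon => hcon)
        · rw [hψ1def, hψ3def, Set.indicator_of_notMem h1, Set.indicator_of_notMem h3]
          simp
    have hbo : ∀ x ∈ R.erase x₀, ∀ r : ℝ, ψ1 r + ψ2 r + ψ3 r ≤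
        (∫⋯∫⁻_((R.erase x).image Sum.inl), (G x).indicator (fun _ => (1:ℝ≥0∞))
          ∂fun _ => volume.restrict (Set.Icc (0:ℝ) 1))
          (Function.update ω (Sum.inl x) r) := by
      intro x hxe r
      have hxR : x ∈ R := Finset.mem_of_mem_erase hxe
      have hxne : x ≠ x₀ := (Finset.mem_erase.mp hxe).1
      have hk1 : 1 ≤ k := by
        have hcardpos : 0 < (R.erase x₀).card := Finset.card_pos.mpr ⟨x, hxe⟩
        rw [hcardE x₀ hx₀R] at hcardpos
        omega
      by_cases h1 : r ∈ Set.Ioo (0:ℝ) s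
      · have h2 : r ∉ Set.Ioo s t := fun hr => lt_asymm h1.2 hr.1
        have h3 : r ∉ Set.Ioo t M := fun hr =>
          absurd (lt_trans hr.1 h1.2) (not_lt.mpr hst)
        rw [hψ1def, hψ2def, hψ3def, Set.indicator_of_mem h1, Set.indicator_of_notMem h2,
          Set.indicator_of_notMem h3, add_zero, add_zero]
        have hb := hinner x hxR r r r (le_of_lt h1.1) le_rfl le_rfl
          (le_trans (le_of_lt h1.2) hs1) h1.1 (lt_of_lt_of_le h1.2 (le_trans hst htM))
          (fun _ hcon => lt_asymm h1.2 hcon.1)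
          (fun u hur hcon => absurd hcon.1 (not_lt.mpr (le_of_lt (lt_trans hur h1.2))))
        rw [div_self (ne_of_gt h1.1)] at hb
        exact hb
      · by_cases h2 : r ∈ Set.Ioo s t
        · have h3 : r ∉ Set.Ioo t M := fun hr => lt_asymm h2.2 hr.1
          rw [hψ1def, hψ2def, hψ3def, Set.indicator_of_notMem h1, Set.indicator_of_mem h2,
            Set.indicator_of_notMem h3, zero_add, add_zero]
          have hrpos : 0 < r := lt_of_le_of_lt hs h2.1
          have hb := hinner x hxR r s r hs (le_of_lt h2.1) le_rfl
            (le_trans (le_of_lt h2.2) ht1) hrpos (lt_of_lt_of_le h2.2 htM)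
            (fun heq => absurd heq hxne)
            (fun u hur hcon => ⟨hcon.1, le_of_lt hur⟩)
          have hpow : r ^ k = r ^ (k-1) * r := by
            rw [← pow_succ, Nat.sub_add_cancel hk1]
          have heq : s / r * r ^ k = s * r ^ (k-1) := by
            rw [hpow]
            field_simp
          rw [heq] at hb
          exact hb
        · by_cases h3 : r ∈ Set.Ioo t M
          · rw [hψ1def, hψ2def, hψ3def, Set.indicator_of_notMem h1,
              Set.indicator_of_notMem h2, Set.indicator_of_mem h3, zero_add, zero_add]
            exact hinner x hxR r s t hs hst (le_of_lt h3.1)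
              (le_trans (le_of_lt h3.2) hM1) (lt_of_le_of_lt ht0 h3.1) h3.2
              (fun _ hcon => absurd hcon.2 (not_le.mpr h3.1))
              (fun u _ hcon => hcon)
          · rw [hψ1def, hψ2def, hψ3def, Set.indicator_of_notMem h1,
              Set.indicator_of_notMem h2, Set.indicator_of_notMem h3]
            simp
    -- integrated bounds
    have hJ1 : ∫⁻ r, ψ1 r ∂(volume.restrict (Set.Icc (0:ℝ) 1)) =
        ENNReal.ofReal (1 * ((s ^ (k+1) - 0 ^ (k+1)) / (k+1))) :=
      lintegral_indicator_pow k le_rfl hs hs1 zero_le_one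
    have hJ2 : ∫⁻ r, ψ2 r ∂(volume.restrict (Set.Icc (0:ℝ) 1)) =
        ENNReal.ofReal (s * ((t ^ (k-1+1) - s ^ (k-1+1)) / (((k-1:ℕ):ℝ) + 1))) :=
      lintegral_indicator_pow (k-1) hs hst ht1 hs
    have hJ3 : ∫⁻ r, ψ3 r ∂(volume.restrict (Set.Icc (0:ℝ) 1)) =
        ENNReal.ofReal ((s/t) * ((M ^ (k+1) - t ^ (k+1)) / (k+1))) :=
      lintegral_indicator_pow k ht0 htM hM1 (div_nonneg hs ht0)
    have hx₀bound : ENNReal.ofReal (1 * ((s ^ (k+1) - 0 ^ (k+1)) / (k+1))) +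
        ENNReal.ofReal ((s/t) * ((M ^ (k+1) - t ^ (k+1)) / (k+1))) ≤ lmarg x₀ := by
      rw [hpeel x₀ hx₀R, ← hJ1, ← hJ3, ← lintegral_add_left hψ1m]
      exact lintegral_mono hb0
    have hotherbound : ∀ x ∈ R.erase x₀,
        ENNReal.ofReal (1 * ((s ^ (k+1) - 0 ^ (k+1)) / (k+1))) +
        ENNReal.ofReal (s * ((t ^ (k-1+1) - s ^ (k-1+1)) / (((k-1:ℕ):ℝ) + 1))) +
        ENNReal.ofReal ((s/t) * ((M ^ (k+1) - t ^ (k+1)) / (k+1))) ≤ lmarg x := by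
      intro x hxe
      rw [hpeel x (Finset.mem_of_mem_erase hxe), ← hJ1, ← hJ2, ← hJ3,
        ← lintegral_add_left hψ1m, ← lintegral_add_left (f := fun a => ψ1 a + ψ2 a) (hψ1m.add hψ2m)]
      exact lintegral_mono (hbo x hxe)
    -- summation
    have hsumle : ∑ x ∈ R, lmarg x ≤
        (∫⋯∫⁻_(R.image Sum.inl), (DSet w R s t M).indicator (fun _ => (1:ℝ≥0∞))
          ∂fun _ => volume.restrict (Set.Icc (0:ℝ) 1)) ω := by
      rw [hlmargdef]
      simp only
      rw [← lmarginal_finset_sum (R.image Sum.inl) R _ hmeasind ω]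
      exact lmarginal_mono (fun η => hpt η) ω
    refine le_trans ?_ hsumle
    rw [← Finset.add_sum_erase R lmarg hx₀R]
    have herasesum : (R.erase x₀).card •
        (ENNReal.ofReal (1 * ((s ^ (k+1) - 0 ^ (k+1)) / (k+1))) +
         ENNReal.ofReal (s * ((t ^ (k-1+1) - s ^ (k-1+1)) / (((k-1:ℕ):ℝ) + 1))) +
         ENNReal.ofReal ((s/t) * ((M ^ (k+1) - t ^ (k+1)) / (k+1)))) ≤
        ∑ x ∈ R.erase x₀, lmarg x := by
      rw [← Finset.sum_const]
      exact Finset.sum_le_sum hotherbound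
    rw [hcardE x₀ hx₀R] at herasesum
    refine le_trans ?_ (add_le_add hx₀bound herasesum)
    -- final arithmetic
    have hc1 : (0:ℝ) ≤ 1 * ((s ^ (k+1) - 0 ^ (k+1)) / (k+1)) := by
      rw [one_mul]
      apply div_nonneg _ (by positivity)
      rw [zero_pow (by omega : k + 1 ≠ 0), sub_zero]
      positivity
    have hc2 : (0:ℝ) ≤ s * ((t ^ (k-1+1) - s ^ (k-1+1)) / (((k-1:ℕ):ℝ) + 1)) := by
      apply mul_nonneg hs
      apply div_nonneg _ (by positivity)
      rw [sub_nonneg]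
      exact pow_le_pow_left₀ hs hst _
    have hc3 : (0:ℝ) ≤ (s/t) * ((M ^ (k+1) - t ^ (k+1)) / (k+1)) := by
      apply mul_nonneg (div_nonneg hs ht0)
      apply div_nonneg _ (by positivity)
      rw [sub_nonneg]
      exact pow_le_pow_left₀ ht0 htM _
    rw [nsmul_eq_mul, ← ENNReal.ofReal_natCast k,
      ← ENNReal.ofReal_add hc1 hc2,
      ← ENNReal.ofReal_add (add_nonneg hc1 hc2) hc3,
      ← ENNReal.ofReal_mul (Nat.cast_nonneg k),
      ← ENNReal.ofReal_add hc1 hc3,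
      ← ENNReal.ofReal_add (add_nonneg hc1 hc3)
        (mul_nonneg (Nat.cast_nonneg k) (add_nonneg (add_nonneg hc1 hc2) hc3))]
    apply ENNReal.ofReal_le_ofReal
    rcases Nat.eq_zero_or_pos k with rfl | hk1
    · apply le_of_eq
      norm_num
      field_simp
      ring
    · apply le_of_eq
      rw [Nat.sub_add_cancel hk1, zero_pow (by omega : k + 1 ≠ 0)]
      have hcast : ((k-1:ℕ):ℝ) + 1 = (k:ℝ) := by
        rw [Nat.cast_sub hk1]; ring
      rw [hcast]
      have hkne : (k:ℝ) ≠ 0 := Nat.cast_ne_zero.mpr (by omega)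
      have hk1ne : ((k:ℝ) + 1) ≠ 0 := by positivity
      push_cast
      field_simp
      ring

end Key

section Assembly
variable {P : Type} [Fintype P] [PartialOrder P]

lemma measurableSet_noTag_joint (R : Finset P) (s t : ℝ) :
    MeasurableSet {η : (P ⊕ P) → ℝ | ∀ x ∈ R, TagIn (fun p => η (Sum.inr p)) R η x →
      ¬(s < η (Sum.inl x) ∧ η (Sum.inl x) ≤ t)} := by
  have : {η : (P ⊕ P) → ℝ | ∀ x ∈ R, TagIn (fun p => η (Sum.inr p)) R η x →
      ¬(s < η (Sum.inl x) ∧ η (Sum.inl x) ≤ t)} =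
      ⋂ x : P, ⋂ _ : x ∈ R,
        ({η : (P ⊕ P) → ℝ | TagIn (fun p => η (Sum.inr p)) R η x}ᶜ ∪
        {η : (P ⊕ P) → ℝ | s < η (Sum.inl x) ∧ η (Sum.inl x) ≤ t}ᶜ) := by
    ext η
    simp only [Set.mem_setOf_eq, Set.mem_iInter, Set.mem_union, Set.mem_compl_iff]
    constructor
    · intro h x hx
      by_cases ht : TagIn (fun p => η (Sum.inr p)) R η x
      · exact Or.inr fun hc => h x hx ht hc
      · exact Or.inl ht
    · intro h x hx ht hc
      rcases h x hx with h' | h'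
      · exact h' ht
      · exact h' hc
  rw [this]
  refine MeasurableSet.iInter fun x => MeasurableSet.iInter fun _ => ?_
  exact ((measurableSet_tagIn_joint R x).compl).union
    (((measurableSet_lt measurable_const (measurable_pi_apply _)).inter
      (measurableSet_le (measurable_pi_apply _) measurable_const)).compl)

theorem no_tag_aux (t : ℝ) (ht0 : 1 / Real.exp 1 < t) (ht1 : t ≤ 1) :
    ENNReal.ofReal (1 / (Real.exp 1 * t)) ≤
      (Measure.pi fun _ : P ⊕ P => volume.restrict (Set.Icc (0:ℝ) 1))
        {ω | ∀ x : P,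
          Tagged (fun y => ω (Sum.inl y)) (fun y => ω (Sum.inr y)) x →
            ¬(1 / Real.exp 1 < ω (Sum.inl x) ∧ ω (Sum.inl x) ≤ t)} := by
  haveI := prob_restrict_Icc
  classical
  set s : ℝ := 1 / Real.exp 1 with hsdef
  have hs : 0 ≤ s := by positivity
  set B : Set ((P ⊕ P) → ℝ) :=
    {ω | ω ∈ DSet (fun p => ω (Sum.inr p)) Finset.univ s t 1} with hBdef
  have hBeq : B = {η : (P ⊕ P) → ℝ | ∀ y ∈ (Finset.univ : Finset P), η (Sum.inl y) < 1} ∩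
      {η : (P ⊕ P) → ℝ | ∀ x ∈ (Finset.univ : Finset P),
        TagIn (fun p => η (Sum.inr p)) Finset.univ η x →
        ¬(s < η (Sum.inl x) ∧ η (Sum.inl x) ≤ t)} := by
    ext η
    rfl
  have hBmeas : MeasurableSet B := by
    rw [hBeq]
    exact (measurableSet_timeBound Finset.univ 1).inter
      (measurableSet_noTag_joint Finset.univ s t)
  have hBsub : B ⊆ {ω | ∀ x : P,
      Tagged (fun y => ω (Sum.inl y)) (fun y => ω (Sum.inr y)) x →
        ¬(1 / Real.exp 1 < ω (Sum.inl x) ∧ ω (Sum.inl x) ≤ t)} := by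
    intro ω hω x htag
    obtain ⟨-, hnts⟩ := hω
    have hset : (↑(Finset.univ.filter fun y =>
        ω (Sum.inl y) ≤ ω (Sum.inl x)) : Set P) =
        {y | ω (Sum.inl y) ≤ ω (Sum.inl x)} := by
      ext y; simp
    have htag' : TagIn (fun p => ω (Sum.inr p)) Finset.univ ω x := by
      unfold TagIn
      rw [hset]
      exact htag
    exact hnts x (Finset.mem_univ x) htag'
  refine le_trans ?_ (measure_mono hBsub)
  -- compute the measure of B from below
  have hμB : (Measure.pi fun _ : P ⊕ P => volume.restrict (Set.Icc (0:ℝ) 1)) B =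
      ∫⁻ η, B.indicator (fun _ => (1:ℝ≥0∞)) η
        ∂(Measure.pi fun _ : P ⊕ P => volume.restrict (Set.Icc (0:ℝ) 1)) := by
    exact (lintegral_indicator_one hBmeas).symm
  rw [hμB]
  have hBindmeas : Measurable (B.indicator (fun _ => (1:ℝ≥0∞))) :=
    measurable_const.indicator hBmeas
  have huniv : (Finset.univ : Finset (P ⊕ P)) =
      ((Finset.univ : Finset P).image (Sum.inr : P → P ⊕ P)) ∪
      ((Finset.univ : Finset P).image (Sum.inl : P → P ⊕ P)) := by
    ext i
    cases i <;> simp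
  have hdisj : Disjoint ((Finset.univ : Finset P).image (Sum.inr : P → P ⊕ P))
      ((Finset.univ : Finset P).image (Sum.inl : P → P ⊕ P)) := by
    rw [Finset.disjoint_left]
    intro a ha ha'
    obtain ⟨y, -, rfl⟩ := Finset.mem_image.mp ha
    obtain ⟨z, -, hz⟩ := Finset.mem_image.mp ha'
    exact Sum.inl_ne_inr hz
  rw [lintegral_eq_lmarginal_univ (fun _ => (0:ℝ)), huniv,
    lmarginal_union _ _ hBindmeas hdisj]
  -- inner bound
  have hinner : ∀ η : (P ⊕ P) → ℝ,
      ENNReal.ofReal (1 / (Real.exp 1 * t)) ≤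
      (∫⋯∫⁻_((Finset.univ : Finset P).image (Sum.inl : P → P ⊕ P)),
        B.indicator (fun _ => (1:ℝ≥0∞)) ∂fun _ => volume.restrict (Set.Icc (0:ℝ) 1)) η := by
    intro η
    have hkey := key_lemma (fun p => η (Sum.inr p)) (Fintype.card P) Finset.univ
      (Finset.card_univ) s t 1 hs ht0.le ht1 le_rfl η
    have hle : (∫⋯∫⁻_((Finset.univ : Finset P).image (Sum.inl : P → P ⊕ P)),
        (DSet (fun p => η (Sum.inr p)) Finset.univ s t 1).indicator (fun _ => (1:ℝ≥0∞))
        ∂fun _ => volume.restrict (Set.Icc (0:ℝ) 1)) η ≤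
        (∫⋯∫⁻_((Finset.univ : Finset P).image (Sum.inl : P → P ⊕ P)),
        B.indicator (fun _ => (1:ℝ≥0∞)) ∂fun _ => volume.restrict (Set.Icc (0:ℝ) 1)) η := by
      unfold lmarginal
      apply lintegral_mono
      intro y
      set ζ := Function.updateFinset η
        ((Finset.univ : Finset P).image (Sum.inl : P → P ⊕ P)) y with hζdef
      show (DSet (fun p => η (Sum.inr p)) Finset.univ s t 1).indicator
          (fun _ => (1:ℝ≥0∞)) ζ ≤ B.indicator (fun _ => (1:ℝ≥0∞)) ζ
      have hW : (fun p => ζ (Sum.inr p)) = (fun p => η (Sum.inr p)) := by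
        funext p
        rw [hζdef]
        unfold Function.updateFinset
        rw [dif_neg]
        intro hmem
        obtain ⟨z, -, hz⟩ := Finset.mem_image.mp hmem
        exact Sum.inl_ne_inr hz
      by_cases hmem : ζ ∈ DSet (fun p => η (Sum.inr p)) Finset.univ s t 1
      · have hmemB : ζ ∈ B := by
          rw [hBdef]
          show ζ ∈ DSet (fun p => ζ (Sum.inr p)) Finset.univ s t 1
          rw [hW]
          exact hmem
        rw [Set.indicator_of_mem hmem, Set.indicator_of_mem hmemB]
      · rw [Set.indicator_of_notMem hmem]
        exact zero_le
    refine le_trans ?_ (le_trans hkey hle)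
    apply ENNReal.ofReal_le_ofReal
    rw [one_pow, mul_one, hsdef, div_div]
  -- outer bound
  refine le_trans ?_ (lmarginal_mono (μ := fun _ => volume.restrict (Set.Icc (0:ℝ) 1))
    (f := fun _ => ENNReal.ofReal (1 / (Real.exp 1 * t))) (fun η => hinner η) _)
  unfold lmarginal
  rw [lintegral_const]
  haveI : IsProbabilityMeasure (Measure.pi fun _ :
      ((Finset.univ : Finset P).image (Sum.inr : P → P ⊕ P)) =>
      volume.restrict (Set.Icc (0:ℝ) 1)) := by infer_instance
  rw [measure_univ, mul_one]

end Assembly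

/-- For every `t` with `1/e < t ≤ 1`, the probability that no element is
tagged with arrival time in the interval `(1/e, t]` is at least `1/(e·t)`. -/
theorem no_tag_in_interval_prob (P : Type) [Fintype P] [PartialOrder P] [Nonempty P]
    {t : ℝ} (ht0 : 1 / Real.exp 1 < t) (ht1 : t ≤ 1) :
    ENNReal.ofReal (1 / (Real.exp 1 * t)) ≤
      (Measure.pi fun _ : P ⊕ P => volume.restrict (Set.Icc (0:ℝ) 1))
        {ω | ∀ x : P,
          Tagged (fun y => ω (Sum.inl y)) (fun y => ω (Sum.inr y)) x →
            ¬(1 / Real.exp 1 < ω (Sum.inl x) ∧ ω (Sum.inl x) ≤ t)} := by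
  exact no_tag_aux t ht0 ht1
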